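/- Let B and C be N×N complex matrices such that the product of any c+1 matrices each of the form e^{B s} C (for s ≥ 0) vanishes when C is strictly block upper triangular with c+1 diagonal blocks. If ‖e^{Bt}‖ ≤ e^{λt} with λ < 0 and ‖C‖ ≤ μ, then ‖e^{(B+C)t}‖ ≤ e^{λt} ∑_{k=0}^{c} (μt)^k / k! for all t ≥ 0. -/

import Mathlib

open NormedSpace
open intervalIntegral MeasureTheory

section dysonHelpers

variable {A : Type*} [NormedRing A] [NormedAlgebra ℂ A] [CompleteSpace A]

set_option linter.unusedSectionVars false
set_option linter.unusedVariables false

noncomputable def dysonD (B C : A) : ℕ → ℝ → A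
  | 0, t => exp (t • B)
  | (k+1), t => exp (t • B) * ∫ s in (0:ℝ)..t, exp ((-s) • B) * (C * dysonD B C k s)

theorem dysonD0 (B C : A) : dysonD B C 0 = fun t : ℝ => exp (t • B) := rfl

theorem expBd (B : A) (t : ℝ) : HasDerivAt (fun u : ℝ => exp (u • B)) (B * exp (t • B)) t := by
  have h := hasDerivAt_exp_smul_const' (𝕂 := ℝ) B t
  exact h

theorem expBc (B : A) : Continuous (fun t : ℝ => exp (t • B)) :=
  continuous_iff_continuousAt.2 fun t => (expBd B t).continuousAt

theorem expBm (B : A) (t s : ℝ) : exp (t • B) * exp (s • B) = exp ((t + s) • B) := by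
  rw [← exp_add_of_commute_of_mem_ball (𝕂 := ℂ) (((Commute.refl B).smul_left t).smul_right s)
    ((expSeries_radius_eq_top ℂ A).symm ▸ edist_lt_top _ _)
    ((expSeries_radius_eq_top ℂ A).symm ▸ edist_lt_top _ _), add_smul]

theorem dysonD_cont (B C : A) (k : ℕ) : Continuous (dysonD B C k) := by
  induction k with
  | zero => exact expBc B
  | succ k ih =>
    refine (expBc B).mul ?_
    have hcont : Continuous fun s : ℝ => exp ((-s) • B) * (C * dysonD B C k s) :=
      ((expBc B).comp continuous_neg).mul (continuous_const.mul ih)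
    exact continuous_primitive (fun a b => hcont.intervalIntegrable a b) 0

theorem dysonD_eq (B C : A) (k : ℕ) (t : ℝ) :
    dysonD B C (k+1) t = ∫ s in (0:ℝ)..t, exp ((t - s) • B) * (C * dysonD B C k s) := by
  have hcont : Continuous fun s : ℝ => exp ((-s) • B) * (C * dysonD B C k s) :=
    ((expBc B).comp continuous_neg).mul (continuous_const.mul (dysonD_cont B C k))
  have key := (ContinuousLinearMap.mul ℂ A (exp (t • B))).intervalIntegral_comp_comm
    (hcont.intervalIntegrable (μ := volume) 0 t)
  simp only [ContinuousLinearMap.mul_apply'] at key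
  show exp (t • B) * _ = _
  rw [← key]
  refine integral_congr fun s _ => ?_
  rw [← mul_assoc, expBm, show t + -s = t - s from by ring]

theorem dysonD_deriv (B C : A) (k : ℕ) (t : ℝ) :
    HasDerivAt (dysonD B C (k+1)) (B * dysonD B C (k+1) t + C * dysonD B C k t) t := by
  have hcont : Continuous fun s : ℝ => exp ((-s) • B) * (C * dysonD B C k s) :=
    ((expBc B).comp continuous_neg).mul (continuous_const.mul (dysonD_cont B C k))
  have h1 : HasDerivAt (fun u => ∫ s in (0:ℝ)..u, exp ((-s) • B) * (C * dysonD B C k s))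
      (exp ((-t) • B) * (C * dysonD B C k t)) t :=
    integral_hasDerivAt_right (hcont.intervalIntegrable (μ := volume) 0 t)
      (hcont.stronglyMeasurableAtFilter _ _) hcont.continuousAt
  have h2 := (expBd B t).mul h1
  have h3 : exp (t • B) * (exp ((-t) • B) * (C * dysonD B C k t)) = C * dysonD B C k t := by
    rw [← mul_assoc, expBm]
    norm_num
  rw [mul_assoc, h3] at h2
  exact h2

theorem dysonD_zero (B C : A) (k : ℕ) : dysonD B C k 0 = if k = 0 then 1 else 0 := by
  match k with
  | 0 => show exp ((0:ℝ) • B) = _; rw [zero_smul, exp_zero]; rfl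
  | (k+1) =>
    show exp ((0:ℝ) • B) * ∫ s in (0:ℝ)..(0:ℝ), _ = _
    rw [intervalIntegral.integral_same, mul_zero]
    rfl

theorem dysonD_norm (B C : A) (lam μ : ℝ) (hμ0 : 0 ≤ μ) (hC : ‖C‖ ≤ μ)
    (hB : ∀ t : ℝ, 0 ≤ t → ‖exp (t • B)‖ ≤ Real.exp (lam * t)) (k : ℕ) :
    ∀ t : ℝ, 0 ≤ t →
      ‖dysonD B C k t‖ ≤ Real.exp (lam * t) * (μ * t) ^ k / (Nat.factorial k) := by
  induction k with
  | zero => intro t ht; simpa [dysonD0] using hB t ht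
  | succ k ih =>
    intro t ht
    rw [dysonD_eq]
    set E := Real.exp (lam * t) with hE
    have hbd : ∀ u ∈ Set.Ioc 0 t,
        ‖exp ((t - u) • B) * (C * dysonD B C k u)‖ ≤
          E * μ ^ (k+1) / (Nat.factorial k) * u ^ k := by
      intro u hu
      have hu0 : (0:ℝ) ≤ u := hu.1.le
      have hut : u ≤ t := hu.2
      have h1 : ‖exp ((t - u) • B) * (C * dysonD B C k u)‖ ≤
          Real.exp (lam * (t - u)) * (μ * (Real.exp (lam * u) * (μ * u) ^ k /
            (Nat.factorial k))) := by
        refine (norm_mul_le _ _).trans ?_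
        refine mul_le_mul (hB _ (by linarith)) ((norm_mul_le _ _).trans ?_)
          (norm_nonneg _) (Real.exp_nonneg _)
        exact mul_le_mul hC (ih u hu0) (norm_nonneg _) hμ0
      refine h1.trans_eq ?_
      have h2 : Real.exp (lam * (t - u)) * Real.exp (lam * u) = E := by
        rw [hE, ← Real.exp_add]; ring_nf
      rw [mul_pow]
      field_simp
      calc Real.exp (lam * (t - u)) * μ * Real.exp (lam * u) * μ ^ k * u ^ k
          = (Real.exp (lam * (t - u)) * Real.exp (lam * u)) * (μ * (μ ^ k * u ^ k)) := by ring
        _ = u ^ k * E * μ ^ (k + 1) := by rw [h2]; ring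
    have hbound : IntervalIntegrable (fun u => E * μ ^ (k+1) / (Nat.factorial k) * u ^ k)
        volume 0 t := (Continuous.intervalIntegrable (by continuity)) 0 t
    have hae : ∀ᵐ u ∂volume.restrict (Set.uIoc (0:ℝ) t),
        ‖exp ((t - u) • B) * (C * dysonD B C k u)‖ ≤
          E * μ ^ (k+1) / (Nat.factorial k) * u ^ k := by
      rw [Set.uIoc_of_le ht]
      exact (ae_restrict_iff' measurableSet_Ioc).mpr (Filter.Eventually.of_forall hbd)
    refine (intervalIntegral.norm_integral_le_of_norm_le ht (Filter.Eventually.of_forall hbd) hbound).trans_eq ?_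
    rw [intervalIntegral.integral_const_mul, integral_pow]
    · rw [zero_pow (Nat.succ_ne_zero k), sub_zero, mul_pow, Nat.factorial_succ]
      field_simp
      push_cast
      ring

theorem dysonD_nil (B C : A) (c : ℕ)
    (hnil : ∀ s : Fin (c + 1) → ℝ, (∀ i, 0 ≤ s i) →
      (List.ofFn fun i => exp (s i • B) * C).prod = 0) :
    ∀ k m, m + k = c + 1 → ∀ t : ℝ, 0 ≤ t → ∀ s : Fin m → ℝ, (∀ i, 0 ≤ s i) →
      (List.ofFn fun i => exp (s i • B) * C).prod * dysonD B C k t = 0 := by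
  intro k
  induction k with
  | zero =>
    intro m hm t ht s hs
    have hm' : m = c + 1 := by omega
    subst hm'
    rw [hnil s hs, zero_mul]
  | succ k ih =>
    intro m hm t ht s hs
    rw [dysonD_eq]
    set P := (List.ofFn fun i => exp (s i • B) * C).prod with hP
    have hcont : Continuous fun u : ℝ => exp ((t - u) • B) * (C * dysonD B C k u) :=
      ((expBc B).comp (continuous_const.sub continuous_id)).mul
        (continuous_const.mul (dysonD_cont B C k))
    have key := (ContinuousLinearMap.mul ℂ A P).intervalIntegral_comp_comm
      (hcont.intervalIntegrable (μ := volume) 0 t)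
    simp only [ContinuousLinearMap.mul_apply'] at key
    rw [← key]
    have hzero : ∀ u ∈ Set.uIcc (0:ℝ) t,
        P * (exp ((t - u) • B) * (C * dysonD B C k u)) = 0 := by
      intro u hu
      rw [Set.uIcc_of_le ht] at hu
      have h1 : P * (exp ((t - u) • B) * (C * dysonD B C k u)) =
          (P * (exp ((t - u) • B) * C)) * dysonD B C k u := by
        rw [mul_assoc, ← mul_assoc (exp ((t - u) • B))]
      have h2 : P * (exp ((t - u) • B) * C) =
          (List.ofFn fun i : Fin (m+1) =>
            exp ((Fin.snoc s (t - u) : Fin (m+1) → ℝ) i • B) * C).prod := by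
        rw [List.ofFn_succ', List.prod_concat]
        simp [Fin.snoc_castSucc, Fin.snoc_last, hP]
      rw [h1, h2]
      refine ih (m+1) (by omega) u hu.1 _ ?_
      intro i
      refine Fin.lastCases ?_ ?_ i
      · simp only [Fin.snoc_last]; linarith [hu.2]
      · intro j; simp only [Fin.snoc_castSucc]; exact hs j
    calc (∫ u in (0:ℝ)..t, P * (exp ((t - u) • B) * (C * dysonD B C k u)))
        = ∫ _u in (0:ℝ)..t, (0:A) := integral_congr hzero
      _ = 0 := integral_zero

theorem dyson_main (B C : A) (c : ℕ) (lam μ : ℝ) (hμ : ‖C‖ ≤ μ)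
    (hB : ∀ t : ℝ, 0 ≤ t → ‖exp (t • B)‖ ≤ Real.exp (lam * t))
    (hnil : ∀ s : Fin (c + 1) → ℝ, (∀ i, 0 ≤ s i) →
      (List.ofFn fun i => exp (s i • B) * C).prod = 0) :
    ∀ t : ℝ, 0 ≤ t →
      ‖exp (t • (B + C))‖ ≤
        Real.exp (lam * t) * ∑ k ∈ Finset.range (c + 1), (μ * t) ^ k / (Nat.factorial k) := by
  intro t ht
  have hμ0 : (0:ℝ) ≤ μ := (norm_nonneg C).trans hμ
  set S : ℝ → A := fun u => ∑ k ∈ Finset.range (c+1), dysonD B C k u with hS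
  -- C * D c u = 0 for u ≥ 0
  have hCc : ∀ u : ℝ, 0 ≤ u → C * dysonD B C c u = 0 := by
    intro u hu
    have h := dysonD_nil B C c hnil c 1 (by omega) u hu (fun _ => 0) (fun _ => le_refl 0)
    simpa [List.ofFn_succ, zero_smul, exp_zero] using h
  -- derivative of S
  have hSd : ∀ u : ℝ, 0 ≤ u → HasDerivAt S ((B + C) * S u) u := by
    intro u hu
    have hder : ∀ k ∈ Finset.range (c+1), HasDerivAt (fun v => dysonD B C k v)
        (B * dysonD B C k u + (if k = 0 then 0 else C * dysonD B C (k-1) u)) u := by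
      intro k _
      match k with
      | 0 => simpa [dysonD0] using expBd B u
      | (k+1) => simpa using dysonD_deriv B C k u
    have hsum := HasDerivAt.sum hder
    have heq : (∑ k ∈ Finset.range (c+1),
        (B * dysonD B C k u + (if k = 0 then 0 else C * dysonD B C (k-1) u))) =
        (B + C) * S u := by
      rw [Finset.sum_add_distrib, ← Finset.mul_sum]
      have h1 : (∑ k ∈ Finset.range (c+1),
          (if k = 0 then (0:A) else C * dysonD B C (k-1) u)) =
          ∑ k ∈ Finset.range c, C * dysonD B C k u := by
        rw [Finset.sum_range_succ']
        simp
      have hss : S u = (∑ k ∈ Finset.range c, dysonD B C k u) + dysonD B C c u :=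
        Finset.sum_range_succ _ _
      rw [h1, ← Finset.mul_sum, add_mul, hss, Finset.sum_range_succ, mul_add C,
        hCc u hu, add_zero]
    rw [heq] at hsum
    exact hsum.congr_of_eventuallyEq (Filter.Eventually.of_forall fun v => by simp [hS, Finset.sum_apply])
  -- uniqueness via FTC
  have hS0 : S 0 = 1 := by
    rw [hS]
    simp only [dysonD_zero]
    rw [Finset.sum_ite_eq' (Finset.range (c+1)) 0 (fun _ => (1:A))]
    simp
  have key : exp (t • (B + C)) = S t := by
    set D := B + C with hD
    have hcomm : ∀ u : ℝ, exp ((t - u) • D) * D = D * exp ((t - u) • D) := fun u =>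
      (((Commute.refl D).smul_right (t - u)).exp_right).symm.eq
    have hg : ∀ u ∈ Set.uIcc (0:ℝ) t,
        HasDerivAt (fun v => exp ((t - v) • D) * S v) ((fun _ => (0:A)) u) u := by
      intro u hu
      rw [Set.uIcc_of_le ht] at hu
      have h1 : HasDerivAt (fun v : ℝ => exp ((t - v) • D))
          ((-1 : ℝ) • (D * exp ((t - u) • D))) u := by
        have houter := expBd D (t - u)
        have hinner : HasDerivAt (fun v : ℝ => t - v) (-1) u :=
          (hasDerivAt_id u).const_sub t
        exact HasDerivAt.scomp u houter hinner
      have h2 := h1.mul (hSd u hu.1)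
      have h3 : (-1 : ℝ) • (D * exp ((t - u) • D)) * S u +
          exp ((t - u) • D) * (D * S u) = 0 := by
        rw [← mul_assoc, hcomm u, neg_one_smul, neg_mul, neg_add_cancel]
      rw [h3] at h2
      exact h2
    have hFTC := intervalIntegral.integral_eq_sub_of_hasDerivAt hg
      ((continuous_const (y := (0:A))).intervalIntegrable 0 t)
    simp only [intervalIntegral.integral_zero] at hFTC
    have h4 := (sub_eq_zero.mp hFTC.symm)
    rw [sub_self, zero_smul, exp_zero, one_mul, sub_zero, hS0, mul_one] at h4
    exact h4.symm
  rw [key, hS]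
  refine (norm_sum_le _ _).trans ?_
  rw [Finset.mul_sum]
  refine Finset.sum_le_sum fun k _ => ?_
  rw [← mul_div_assoc]
  exact dysonD_norm B C lam μ hμ0 hμ hB k t ht

end dysonHelpers

/-- Dyson-series bound: let `B, C` be operators such that every product of `c+1` factors,
each of the form `e^{Bs} C` with `s ≥ 0`, vanishes (as happens when `C` is strictly block
upper triangular with `c+1` diagonal blocks, and `B` block diagonal). If `‖e^{Bt}‖ ≤ e^{λt}`
with `λ < 0` and `‖C‖ ≤ μ`, then `‖e^{(B+C)t}‖ ≤ e^{λt} ∑_{k=0}^{c} (μt)^k/k!` for `t ≥ 0`. -/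
theorem dyson_series_bound {N : ℕ}
    (B C : EuclideanSpace ℂ (Fin N) →L[ℂ] EuclideanSpace ℂ (Fin N))
    (c : ℕ) (lam μ : ℝ) (hlam : lam < 0) (hμ : ‖C‖ ≤ μ)
    (hB : ∀ t : ℝ, 0 ≤ t → ‖exp (t • B)‖ ≤ Real.exp (lam * t))
    (hnil : ∀ s : Fin (c + 1) → ℝ, (∀ i, 0 ≤ s i) →
      (List.ofFn fun i => exp (s i • B) * C).prod = 0) :
    ∀ t : ℝ, 0 ≤ t →
      ‖exp (t • (B + C))‖ ≤
        Real.exp (lam * t) * ∑ k ∈ Finset.range (c + 1), (μ * t) ^ k / (Nat.factorial k) :=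
  dyson_main B C c lam μ hμ hB hnil
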